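/- Let α > 1, let 𝒟 be a type equipped with a binary adjacency relation Adj, let M_p : 𝒟 → (probability measures on a measurable space R₁) be a mechanism, and let 𝓕 be a map sending each pair (D, r) ∈ 𝒟 × R₁ to a probability measure on a measurable space R₂, measurably in r for each fixed D. Suppose M_p is non-private at order α, i.e. for every ε > 0 there exist adjacent D, D' with D_α(M_p(D) ‖ M_p(D')) > ε. Then the composed mechanism M_r, defined by letting M_r(D) be the measure on R₁×R₂ given by (M_r(D))(A×B) = ∫_A 𝓕(D, r)(B) d(M_p(D))(r), is also non-private at order α: for every ε > 0 there exist adjacent D, D' with D_α(M_r(D) ‖ M_r(D')) > ε. -/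

import Mathlib

open MeasureTheory ProbabilityTheory ENNReal

open Classical in
/-- The Rényi divergence of order `α` between two measures: `(α-1)⁻¹ log ∫ (dP/dQ)^α dQ`
when `P ≪ Q`, and `⊤` otherwise. -/
noncomputable def renyiDiv {X : Type*} [MeasurableSpace X] (α : ℝ) (P Q : Measure X) : EReal :=
  if P ≪ Q then ((α - 1)⁻¹ : ℝ) * ENNReal.log (∫⁻ x, (P.rnDeriv Q x) ^ α ∂Q) else ⊤
/-- If a (pre-trained) mechanism `Mp` is non-private at order `α` (for every `ε > 0` there are
adjacent datasets whose outputs have Rényi divergence exceeding `ε`), then the composed mechanism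
`D ↦ (Mp D, F(D, Mp D))`, given by the measure `Mp D ⊗ₘ F D` on `R₁ × R₂`, remains non-private
at order `α`. -/
lemma jensen_rpow {X : Type*} [MeasurableSpace X] (μ : Measure X) [IsProbabilityMeasure μ]
    {g : X → ℝ≥0∞} (hg : AEMeasurable g μ) {α : ℝ} (hα : 1 < α) :
    (∫⁻ x, g x ∂μ) ^ α ≤ ∫⁻ x, (g x) ^ α ∂μ := by
  have hα0 : (0:ℝ) < α := lt_trans one_pos hα
  have hconj : α.HolderConjugate (α / (α - 1)) := Real.HolderConjugate.conjExponent hα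
  have h := ENNReal.lintegral_mul_le_Lp_mul_Lq μ hconj hg aemeasurable_const (g := fun _ ↦ 1)
  simp only [Pi.mul_apply, mul_one, ENNReal.one_rpow, lintegral_one, measure_univ,
    mul_one] at h
  calc (∫⁻ x, g x ∂μ) ^ α ≤ ((∫⁻ x, g x ^ α ∂μ) ^ (1 / α)) ^ α := by
        exact ENNReal.rpow_le_rpow h (le_of_lt hα0)
    _ = ∫⁻ x, g x ^ α ∂μ := by
        rw [← ENNReal.rpow_mul, one_div, inv_mul_cancel₀ (ne_of_gt hα0), ENNReal.rpow_one]

lemma renyiDiv_le_compProd {R₁ R₂ : Type*} [MeasurableSpace R₁] [MeasurableSpace R₂]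
    {α : ℝ} (hα : 1 < α) (P Q : Measure R₁) [IsProbabilityMeasure P] [IsProbabilityMeasure Q]
    (κ η : Kernel R₁ R₂) [IsMarkovKernel κ] [IsMarkovKernel η] :
    renyiDiv α P Q ≤ renyiDiv α (P ⊗ₘ κ) (Q ⊗ₘ η) := by
  unfold renyiDiv
  by_cases hac : (P ⊗ₘ κ) ≪ (Q ⊗ₘ η)
  swap
  · simp [hac]
  -- P ≪ Q
  have hPQ : P ≪ Q := by
    refine Measure.AbsolutelyContinuous.mk fun s hs hQs ↦ ?_
    have h1 : (Q ⊗ₘ η) (s ×ˢ Set.univ) = 0 := by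
      rw [Measure.compProd_apply_prod hs MeasurableSet.univ]
      simp only [measure_univ, lintegral_one, Measure.restrict_apply MeasurableSet.univ,
        Set.univ_inter]
      exact hQs
    have h2 := hac h1
    rw [Measure.compProd_apply_prod hs MeasurableSet.univ] at h2
    simpa [Measure.restrict_apply MeasurableSet.univ] using h2
  simp only [hac, hPQ, if_true]
  set g : R₁ × R₂ → ℝ≥0∞ := (P ⊗ₘ κ).rnDeriv (Q ⊗ₘ η) with hg
  have hgm : Measurable g := Measure.measurable_rnDeriv _ _
  -- the fiberwise integral of g is a density of P wrt Q
  set f : R₁ → ℝ≥0∞ := fun x ↦ ∫⁻ y, g (x, y) ∂(η x) with hf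
  have hfm : Measurable f := Measurable.lintegral_kernel_prod_right hgm
  have hPf : P = Q.withDensity f := by
    ext s hs
    rw [withDensity_apply _ hs]
    have h1 : P s = (P ⊗ₘ κ) (s ×ˢ Set.univ) := by
      rw [Measure.compProd_apply_prod hs MeasurableSet.univ]
      simp [Measure.restrict_apply MeasurableSet.univ]
    rw [h1, ← Measure.withDensity_rnDeriv_eq _ _ hac, withDensity_apply _ (hs.prod .univ),
      ← hg, Measure.setLIntegral_compProd hgm hs MeasurableSet.univ]
    simp [hf, Measure.restrict_univ]
  have hfeq : f =ᵐ[Q] P.rnDeriv Q :=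
    Measure.eq_rnDeriv hfm Measure.MutuallySingular.zero_left (by rw [zero_add]; exact hPf)
  -- the key integral inequality
  have hint : ∫⁻ x, (P.rnDeriv Q x) ^ α ∂Q ≤ ∫⁻ p, g p ^ α ∂(Q ⊗ₘ η) := by
    have h1 : ∫⁻ x, (P.rnDeriv Q x) ^ α ∂Q = ∫⁻ x, f x ^ α ∂Q :=
      lintegral_congr_ae (hfeq.mono fun x hx ↦ by simp only []; rw [← hx])
    rw [h1, Measure.lintegral_compProd (hgm.pow_const α)]
    refine lintegral_mono fun x ↦ ?_
    exact jensen_rpow (η x) (hgm.comp (measurable_prodMk_left)).aemeasurable hα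
  -- conclude via monotonicity of log and multiplication by a nonneg constant
  have hlog : (ENNReal.log (∫⁻ x, (P.rnDeriv Q x) ^ α ∂Q) : EReal)
      ≤ ENNReal.log (∫⁻ p, g p ^ α ∂(Q ⊗ₘ η)) := ENNReal.log_monotone hint
  have hc : (0:EReal) ≤ ((α - 1)⁻¹ : ℝ) := by
    have : (0:ℝ) ≤ (α - 1)⁻¹ := inv_nonneg.2 (by linarith)
    exact_mod_cast this
  calc ((α - 1)⁻¹ : ℝ) * ENNReal.log (∫⁻ x, (P.rnDeriv Q x) ^ α ∂Q)
      = ENNReal.log (∫⁻ x, (P.rnDeriv Q x) ^ α ∂Q) * ((α - 1)⁻¹ : ℝ) := EReal.mul_comm _ _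
    _ ≤ ENNReal.log (∫⁻ p, g p ^ α ∂(Q ⊗ₘ η)) * ((α - 1)⁻¹ : ℝ) :=
        mul_le_mul_of_nonneg_right hlog hc
    _ = ((α - 1)⁻¹ : ℝ) * ENNReal.log (∫⁻ p, g p ^ α ∂(Q ⊗ₘ η)) := EReal.mul_comm _ _

theorem composed_mechanism_non_private {𝒟 R₁ R₂ : Type*} [MeasurableSpace R₁]
    [MeasurableSpace R₂] (Adj : 𝒟 → 𝒟 → Prop)
    (α : ℝ) (hα : 1 < α)
    (Mp : 𝒟 → Measure R₁) (hMp : ∀ D, IsProbabilityMeasure (Mp D))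
    (F : 𝒟 → Kernel R₁ R₂) (hF : ∀ D, IsMarkovKernel (F D))
    (h : ∀ ε : ℝ, 0 < ε → ∃ D D', Adj D D' ∧ (ε : EReal) < renyiDiv α (Mp D) (Mp D')) :
    ∀ ε : ℝ, 0 < ε →
      ∃ D D', Adj D D' ∧ (ε : EReal) < renyiDiv α (Mp D ⊗ₘ F D) (Mp D' ⊗ₘ F D') := by
  intro ε hε
  obtain ⟨D, D', hAdj, hlt⟩ := h ε hε
  refine ⟨D, D', hAdj, lt_of_lt_of_le hlt ?_⟩
  have := hMp D; have := hMp D'; have := hF D; have := hF D'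
  exact renyiDiv_le_compProd hα (Mp D) (Mp D') (F D) (F D')
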